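/- For every traceless derivation g ∈ sl_3 (acting on ternary forms of degree n by the corresponding vector field, e.g. x∂y, y∂z, x∂x − y∂y, etc.) and every form q of degree n, the identity ⟨h_n(q), g·q⟩ = 0 holds, where h_n(q) = J_n(q,q). -/

import Mathlib

noncomputable section
open MvPolynomial

/-- Polynomials in the six variables `x, y, z, u, v, w` (indexed `0,…,5`). -/
abbrev Poly6 (A : Type*) [CommRing A] := MvPolynomial (Fin 6) A

variable {A : Type*} [CommRing A]

/-- The operator `v∂z − w∂y` substituted for `x`. -/
def D1 (p : Poly6 A) : Poly6 A := X 4 * pderiv 2 p - X 5 * pderiv 1 p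

/-- The operator `w∂x − u∂z` substituted for `y`. -/
def D2 (p : Poly6 A) : Poly6 A := X 5 * pderiv 0 p - X 3 * pderiv 2 p

/-- The operator `u∂y − v∂x` substituted for `z`. -/
def D3 (p : Poly6 A) : Poly6 A := X 3 * pderiv 1 p - X 4 * pderiv 0 p

/-- The bilinear map `J_n`: substitute the operators `D1, D2, D3` into the first
argument and apply the resulting differential operator to the second argument. -/
def Jn (q1 q2 : Poly6 A) : Poly6 A :=
  ∑ m ∈ q1.support, MvPolynomial.C (q1.coeff m) *
    (D1^[m 0] (D2^[m 1] (D3^[m 2] q2)))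

/-- The polar pairing `⟨p, q⟩ = p(∂x, ∂y, ∂z) q`, where `p` is a form in the dual
variables `u, v, w` and `q` a form (of the same degree) in `x, y, z`; the result is
a constant, recorded via its constant coefficient. -/
def polarPair (p q : Poly6 A) : A :=
  constantCoeff (∑ m ∈ p.support, MvPolynomial.C (p.coeff m) *
    ((fun r => pderiv 0 r)^[m 3] ((fun r => pderiv 1 r)^[m 4] ((fun r => pderiv 2 r)^[m 5] q))))

/-- The trilinear form `t_n(q1, q2, q3) = ⟨J_n(q1, q2), q3⟩`. -/
def tn (q1 q2 q3 : Poly6 A) : A := polarPair (Jn q1 q2) q3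

/-- The harmonic contravariant `h_n(q) = J_n(q, q)`. -/
def hn (q : Poly6 A) : Poly6 A := Jn q q

/-- A polynomial involves only the variables `x, y, z` (indices `0, 1, 2`). -/
def OnlyXYZ (q : Poly6 A) : Prop := ∀ m ∈ q.support, m 3 = 0 ∧ m 4 = 0 ∧ m 5 = 0

end

noncomputable section
open MvPolynomial
-- ================= auxiliary development over ℤ =================
abbrev P6 := Poly6 ℤ

lemma pd_comm (i j : Fin 6) (p : P6) :
    pderiv i (pderiv j p) = pderiv j (pderiv i p) := by
  induction p using MvPolynomial.induction_on with
  | C a => simp [pderiv_C]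
  | add p q hp hq => simp [map_add, hp, hq]
  | mul_X p k hp =>
      simp only [pderiv_mul, map_add, pderiv_X, hp, Pi.single_apply, apply_ite,
        pderiv_one, map_zero, pderiv_C]
      split <;> split <;> ring

-- support-sum helpers
lemma supportSum_add (F : (Fin 6 →₀ ℕ) → P6) (p q : P6) :
    ∑ m ∈ (p + q).support, C ((p+q).coeff m) * F m
    = (∑ m ∈ p.support, C (p.coeff m) * F m) + ∑ m ∈ q.support, C (q.coeff m) * F m := by
  have h : ∀ r : P6, ∑ m ∈ r.support, C (r.coeff m) * F m
      = Finsupp.sum (AddMonoidAlgebra.coeff r) (fun m c => C c * F m) := fun r => rfl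
  rw [h, h, h]
  exact Finsupp.sum_add_index (by simp) (by intros; rw [map_add, add_mul])

lemma supportSum_monomial (F : (Fin 6 →₀ ℕ) → P6) (m0 : Fin 6 →₀ ℕ) (c : ℤ) :
    ∑ m ∈ (monomial m0 c).support, C ((monomial m0 c).coeff m) * F m = C c * F m0 := by
  rcases eq_or_ne c 0 with rfl | hc
  · simp [support_monomial]
  · simp [support_monomial, hc, coeff_monomial]

-- additivity of D's
lemma D1_add (p q : P6) : D1 (p + q) = D1 p + D1 q := by simp [D1]; ring
lemma D2_add (p q : P6) : D2 (p + q) = D2 p + D2 q := by simp [D2]; ring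
lemma D3_add (p q : P6) : D3 (p + q) = D3 p + D3 q := by simp [D3]; ring

section gen
variable {B : P6 → P6} (hB : ∀ p q, B (p + q) = B p + B q)
include hB

lemma gen_zero : B 0 = 0 := by
  have := hB 0 0; simpa using this.symm

lemma gen_neg (p : P6) : B (-p) = - B p := by
  have := hB p (-p); rw [add_neg_cancel, gen_zero hB] at this
  linear_combination -this

lemma gen_nsmul (k : ℕ) (p : P6) : B (k • p) = k • B p := by
  induction k with
  | zero => simpa using gen_zero hB
  | succ k ih => rw [succ_nsmul, succ_nsmul, hB, ih]

lemma gen_iter_add (k : ℕ) (p q : P6) : B^[k] (p + q) = B^[k] p + B^[k] q := by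
  induction k generalizing p q with
  | zero => simp
  | succ k ih => rw [Function.iterate_succ_apply, Function.iterate_succ_apply,
      Function.iterate_succ_apply, hB, ih]

lemma gen_iter_nsmul (k n : ℕ) (p : P6) : B^[k] (n • p) = n • B^[k] p := by
  induction k generalizing p with
  | zero => simp
  | succ k ih => rw [Function.iterate_succ_apply, Function.iterate_succ_apply,
      gen_nsmul hB, ih]

lemma gen_iter_neg (k : ℕ) (p : P6) : B^[k] (-p) = - B^[k] p := by
  induction k generalizing p with
  | zero => simp
  | succ k ih => rw [Function.iterate_succ_apply, Function.iterate_succ_apply,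
      gen_neg hB, ih]

lemma gen_iter_sub (k : ℕ) (p q : P6) : B^[k] (p - q) = B^[k] p - B^[k] q := by
  rw [sub_eq_add_neg, gen_iter_add hB, gen_iter_neg hB, sub_eq_add_neg]

-- main iterate commutation lemma
lemma iter_comm {Aop E : P6 → P6} (hAB : ∀ p, Aop (B p) = B (Aop p) + E p)
    (hEB : ∀ p, E (B p) = B (E p)) :
    ∀ (n : ℕ) (p : P6), Aop (B^[n] p) = B^[n] (Aop p) + n • B^[n-1] (E p) := by
  intro n
  induction n with
  | zero => intro p; simp
  | succ n ih =>
      intro p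
      have key : n • B^[n-1] (B (E p)) = n • B^[n] (E p) := by
        cases n with
        | zero => simp
        | succ m => rw [show m + 1 - 1 = m from rfl, ← Function.iterate_succ_apply]
      calc Aop (B^[n+1] p) = Aop (B^[n] (B p)) := by rw [Function.iterate_succ_apply]
        _ = B^[n] (Aop (B p)) + n • B^[n-1] (E (B p)) := ih (B p)
        _ = B^[n] (B (Aop p) + E p) + n • B^[n-1] (B (E p)) := by rw [hAB, hEB]
        _ = B^[n] (B (Aop p)) + B^[n] (E p) + n • B^[n] (E p) := by
              rw [gen_iter_add hB, key]
        _ = B^[n+1] (Aop p) + (n+1) • B^[n+1-1] (E p) := by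
              rw [← Function.iterate_succ_apply, show n + 1 - 1 = n from rfl, succ_nsmul]
              abel

end gen

lemma iter_comm0 {B Aop : P6 → P6} (hAB : ∀ p, Aop (B p) = B (Aop p)) :
    ∀ (n : ℕ) (p : P6), Aop (B^[n] p) = B^[n] (Aop p) := by
  intro n
  induction n with
  | zero => intro p; simp
  | succ n ih => intro p; rw [Function.iterate_succ_apply, ih (B p), hAB,
      Function.iterate_succ_apply]
-- commutation of pderiv k (k = 0,1,2,3 as appropriate) with D's
lemma pdx_D1 {k : Fin 6} (h4 : k ≠ 4) (h5 : k ≠ 5) (p : P6) :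
    pderiv k (D1 p) = D1 (pderiv k p) := by
  simp only [D1, map_sub, pderiv_mul, pderiv_X_of_ne (Ne.symm h4),
    pderiv_X_of_ne (Ne.symm h5), zero_mul, zero_add, pd_comm k 2 p, pd_comm k 1 p]
lemma pdx_D2 {k : Fin 6} (h3 : k ≠ 3) (h5 : k ≠ 5) (p : P6) :
    pderiv k (D2 p) = D2 (pderiv k p) := by
  simp only [D2, map_sub, pderiv_mul, pderiv_X_of_ne (Ne.symm h3),
    pderiv_X_of_ne (Ne.symm h5), zero_mul, zero_add, pd_comm k 0 p, pd_comm k 2 p]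
lemma pdx_D3 {k : Fin 6} (h3 : k ≠ 3) (h4 : k ≠ 4) (p : P6) :
    pderiv k (D3 p) = D3 (pderiv k p) := by
  simp only [D3, map_sub, pderiv_mul, pderiv_X_of_ne (Ne.symm h3),
    pderiv_X_of_ne (Ne.symm h4), zero_mul, zero_add, pd_comm k 0 p, pd_comm k 1 p]

lemma pd4_D1 (p : P6) : pderiv 4 (D1 p) = D1 (pderiv 4 p) + pderiv 2 p := by
  simp only [D1, map_sub, pderiv_mul, pderiv_X_self,
    pderiv_X_of_ne (show (5:Fin 6) ≠ 4 by decide), zero_mul, zero_add, one_mul,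
    pd_comm 4 2 p, pd_comm 4 1 p]
  ring
lemma pd5_D1 (p : P6) : pderiv 5 (D1 p) = D1 (pderiv 5 p) - pderiv 1 p := by
  simp only [D1, map_sub, pderiv_mul, pderiv_X_self,
    pderiv_X_of_ne (show (4:Fin 6) ≠ 5 by decide), zero_mul, zero_add, one_mul,
    pd_comm 5 2 p, pd_comm 5 1 p]
  ring
lemma pd3_D2 (p : P6) : pderiv 3 (D2 p) = D2 (pderiv 3 p) - pderiv 2 p := by
  simp only [D2, map_sub, pderiv_mul, pderiv_X_self,
    pderiv_X_of_ne (show (5:Fin 6) ≠ 3 by decide), zero_mul, zero_add, one_mul,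
    pd_comm 3 0 p, pd_comm 3 2 p]
  ring
lemma pd5_D2 (p : P6) : pderiv 5 (D2 p) = D2 (pderiv 5 p) + pderiv 0 p := by
  simp only [D2, map_sub, pderiv_mul, pderiv_X_self,
    pderiv_X_of_ne (show (3:Fin 6) ≠ 5 by decide), zero_mul, zero_add, one_mul,
    pd_comm 5 0 p, pd_comm 5 2 p]
  ring
lemma pd3_D3 (p : P6) : pderiv 3 (D3 p) = D3 (pderiv 3 p) + pderiv 1 p := by
  simp only [D3, map_sub, pderiv_mul, pderiv_X_self,
    pderiv_X_of_ne (show (4:Fin 6) ≠ 3 by decide), zero_mul, zero_add, one_mul,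
    pd_comm 3 0 p, pd_comm 3 1 p]
  ring
lemma pd4_D3 (p : P6) : pderiv 4 (D3 p) = D3 (pderiv 4 p) - pderiv 0 p := by
  simp only [D3, map_sub, pderiv_mul, pderiv_X_self,
    pderiv_X_of_ne (show (3:Fin 6) ≠ 4 by decide), zero_mul, zero_add, one_mul,
    pd_comm 4 0 p, pd_comm 4 1 p]
  ring

-- Jn and polarPair structural lemmas
lemma jn_add_left (a a' b : P6) : Jn (a + a') b = Jn a b + Jn a' b :=
  supportSum_add _ a a'
lemma jn_monomial (m : Fin 6 →₀ ℕ) (c : ℤ) (b : P6) :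
    Jn (monomial m c) b = C c * D1^[m 0] (D2^[m 1] (D3^[m 2] b)) :=
  supportSum_monomial _ m c
lemma pp_add_left (p p' r : P6) : polarPair (p + p') r = polarPair p r + polarPair p' r := by
  unfold polarPair
  rw [supportSum_add, map_add]
lemma pp_monomial (m : Fin 6 →₀ ℕ) (c : ℤ) (r : P6) :
    polarPair (monomial m c) r = c * constantCoeff
      ((fun r => pderiv 0 r)^[m 3] ((fun r => pderiv 1 r)^[m 4] ((fun r => pderiv 2 r)^[m 5] r))) := by
  unfold polarPair
  rw [supportSum_monomial, map_mul, constantCoeff_C]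

-- iterate commutation of ∂u,∂v,∂w through the D-iterates
lemma pd3_iter (a b c : ℕ) (r : P6) :
    pderiv 3 (D1^[a] (D2^[b] (D3^[c] r)))
    = D1^[a] (D2^[b] (D3^[c] (pderiv 3 r)))
      + c • D1^[a] (D2^[b] (D3^[c-1] (pderiv 1 r)))
      - b • D1^[a] (D2^[b-1] (D3^[c] (pderiv 2 r))) := by
  have h1 : pderiv 3 (D1^[a] (D2^[b] (D3^[c] r)))
      = D1^[a] (pderiv 3 (D2^[b] (D3^[c] r))) :=
    iter_comm0 (fun p => pdx_D1 (by decide) (by decide) p) a _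
  have h2 : pderiv 3 (D2^[b] (D3^[c] r))
      = D2^[b] (pderiv 3 (D3^[c] r)) + b • D2^[b-1] (-(pderiv 2 (D3^[c] r))) :=
    iter_comm (E := fun p => -(pderiv 2 p)) D2_add (fun p => by rw [pd3_D2, sub_eq_add_neg])
      (fun p => by show -(pderiv 2 (D2 p)) = D2 (-(pderiv 2 p)); rw [pdx_D2 (by decide) (by decide), gen_neg D2_add]) b _
  have h3 : pderiv 3 (D3^[c] r)
      = D3^[c] (pderiv 3 r) + c • D3^[c-1] (pderiv 1 r) :=
    iter_comm (E := fun p => pderiv 1 p) D3_add (fun p => pd3_D3 p)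
      (fun p => pdx_D3 (by decide) (by decide) p) c r
  have h4 : pderiv 2 (D3^[c] r) = D3^[c] (pderiv 2 r) :=
    iter_comm0 (fun p => pdx_D3 (by decide) (by decide) p) c r
  rw [h1, h2, h3, h4]
  simp only [gen_iter_add D1_add, gen_iter_add D2_add, gen_iter_add D3_add,
    gen_iter_nsmul D1_add, gen_iter_nsmul D2_add, gen_iter_nsmul D3_add,
    gen_iter_neg D1_add, gen_iter_neg D2_add, gen_iter_neg D3_add, smul_neg]
  abel

lemma pd4_iter (a b c : ℕ) (r : P6) :
    pderiv 4 (D1^[a] (D2^[b] (D3^[c] r)))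
    = D1^[a] (D2^[b] (D3^[c] (pderiv 4 r)))
      + a • D1^[a-1] (D2^[b] (D3^[c] (pderiv 2 r)))
      - c • D1^[a] (D2^[b] (D3^[c-1] (pderiv 0 r))) := by
  have h1 : pderiv 4 (D1^[a] (D2^[b] (D3^[c] r)))
      = D1^[a] (pderiv 4 (D2^[b] (D3^[c] r))) + a • D1^[a-1] (pderiv 2 (D2^[b] (D3^[c] r))) :=
    iter_comm (E := fun p => pderiv 2 p) D1_add (fun p => pd4_D1 p)
      (fun p => pdx_D1 (by decide) (by decide) p) a _
  have h2 : pderiv 4 (D2^[b] (D3^[c] r)) = D2^[b] (pderiv 4 (D3^[c] r)) :=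
    iter_comm0 (fun p => pdx_D2 (by decide) (by decide) p) b _
  have h3 : pderiv 4 (D3^[c] r)
      = D3^[c] (pderiv 4 r) + c • D3^[c-1] (-(pderiv 0 r)) :=
    iter_comm (E := fun p => -(pderiv 0 p)) D3_add (fun p => by rw [pd4_D3, sub_eq_add_neg])
      (fun p => by show -(pderiv 0 (D3 p)) = D3 (-(pderiv 0 p)); rw [pdx_D3 (by decide) (by decide), gen_neg D3_add]) c r
  have h4 : pderiv 2 (D2^[b] (D3^[c] r)) = D2^[b] (D3^[c] (pderiv 2 r)) := by
    rw [iter_comm0 (fun p => pdx_D2 (by decide) (by decide) p) b,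
      iter_comm0 (fun p => pdx_D3 (by decide) (by decide) p) c]
  rw [h1, h2, h3, h4]
  simp only [gen_iter_add D1_add, gen_iter_add D2_add, gen_iter_add D3_add,
    gen_iter_nsmul D1_add, gen_iter_nsmul D2_add, gen_iter_nsmul D3_add,
    gen_iter_neg D1_add, gen_iter_neg D2_add, gen_iter_neg D3_add, smul_neg]
  abel

lemma pd5_iter (a b c : ℕ) (r : P6) :
    pderiv 5 (D1^[a] (D2^[b] (D3^[c] r)))
    = D1^[a] (D2^[b] (D3^[c] (pderiv 5 r)))
      + b • D1^[a] (D2^[b-1] (D3^[c] (pderiv 0 r)))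
      - a • D1^[a-1] (D2^[b] (D3^[c] (pderiv 1 r))) := by
  have h1 : pderiv 5 (D1^[a] (D2^[b] (D3^[c] r)))
      = D1^[a] (pderiv 5 (D2^[b] (D3^[c] r))) + a • D1^[a-1] (-(pderiv 1 (D2^[b] (D3^[c] r)))) :=
    iter_comm (E := fun p => -(pderiv 1 p)) D1_add (fun p => by rw [pd5_D1, sub_eq_add_neg])
      (fun p => by show -(pderiv 1 (D1 p)) = D1 (-(pderiv 1 p)); rw [pdx_D1 (by decide) (by decide), gen_neg D1_add]) a _
  have h2 : pderiv 5 (D2^[b] (D3^[c] r))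
      = D2^[b] (pderiv 5 (D3^[c] r)) + b • D2^[b-1] (pderiv 0 (D3^[c] r)) :=
    iter_comm (E := fun p => pderiv 0 p) D2_add (fun p => pd5_D2 p)
      (fun p => pdx_D2 (by decide) (by decide) p) b _
  have h3 : pderiv 5 (D3^[c] r) = D3^[c] (pderiv 5 r) :=
    iter_comm0 (fun p => pdx_D3 (by decide) (by decide) p) c r
  have h4 : pderiv 0 (D3^[c] r) = D3^[c] (pderiv 0 r) :=
    iter_comm0 (fun p => pdx_D3 (by decide) (by decide) p) c r
  have h5 : pderiv 1 (D2^[b] (D3^[c] r)) = D2^[b] (D3^[c] (pderiv 1 r)) := by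
    rw [iter_comm0 (fun p => pdx_D2 (by decide) (by decide) p) b,
      iter_comm0 (fun p => pdx_D3 (by decide) (by decide) p) c]
  rw [h1, h2, h3, h4, h5]
  simp only [gen_iter_add D1_add, gen_iter_add D2_add, gen_iter_add D3_add,
    gen_iter_nsmul D1_add, gen_iter_nsmul D2_add, gen_iter_nsmul D3_add,
    gen_iter_neg D1_add, gen_iter_neg D2_add, gen_iter_neg D3_add, smul_neg]
  abel

lemma sub_single_ne (m : Fin 6 →₀ ℕ) {l j : Fin 6} (h : l ≠ j) :
    ((m - Finsupp.single l 1 : Fin 6 →₀ ℕ)) j = m j := by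
  rw [Finsupp.tsub_apply, Finsupp.single_apply, if_neg h, Nat.sub_zero]

lemma sub_single_self (m : Fin 6 →₀ ℕ) (l : Fin 6) :
    ((m - Finsupp.single l 1 : Fin 6 →₀ ℕ)) l = m l - 1 := by
  rw [Finsupp.tsub_apply, Finsupp.single_apply, if_pos rfl]

lemma nsmul_C (k : ℕ) (x : P6) : k • x = C (k : ℤ) * x := by
  rw [nsmul_eq_mul, ← map_natCast (C : ℤ →+* P6) k]

lemma L2_3 (b a : P6) : pderiv 3 (Jn a b)
    = Jn a (pderiv 3 b) + Jn (pderiv 2 a) (pderiv 1 b) - Jn (pderiv 1 a) (pderiv 2 b) := by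
  induction a using MvPolynomial.induction_on' with
  | add p q hp hq => simp only [jn_add_left, map_add, hp, hq]; abel
  | monomial m c =>
      rw [jn_monomial, pderiv_C_mul, pd3_iter, pderiv_monomial, pderiv_monomial,
        jn_monomial, jn_monomial, jn_monomial,
        sub_single_ne m (show (2:Fin 6) ≠ 0 by decide),
        sub_single_ne m (show (2:Fin 6) ≠ 1 by decide),
        sub_single_self m 2,
        sub_single_ne m (show (1:Fin 6) ≠ 0 by decide),
        sub_single_self m 1,
        sub_single_ne m (show (1:Fin 6) ≠ 2 by decide),
        nsmul_C, nsmul_C, map_mul, map_mul]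
      push_cast
      ring

lemma L2_4 (b a : P6) : pderiv 4 (Jn a b)
    = Jn a (pderiv 4 b) + Jn (pderiv 0 a) (pderiv 2 b) - Jn (pderiv 2 a) (pderiv 0 b) := by
  induction a using MvPolynomial.induction_on' with
  | add p q hp hq => simp only [jn_add_left, map_add, hp, hq]; abel
  | monomial m c =>
      rw [jn_monomial, pderiv_C_mul, pd4_iter, pderiv_monomial, pderiv_monomial,
        jn_monomial, jn_monomial, jn_monomial,
        sub_single_self m 0,
        sub_single_ne m (show (0:Fin 6) ≠ 1 by decide),
        sub_single_ne m (show (0:Fin 6) ≠ 2 by decide),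
        sub_single_ne m (show (2:Fin 6) ≠ 0 by decide),
        sub_single_ne m (show (2:Fin 6) ≠ 1 by decide),
        sub_single_self m 2,
        nsmul_C, nsmul_C, map_mul, map_mul]
      push_cast
      ring

lemma L2_5 (b a : P6) : pderiv 5 (Jn a b)
    = Jn a (pderiv 5 b) + Jn (pderiv 1 a) (pderiv 0 b) - Jn (pderiv 0 a) (pderiv 1 b) := by
  induction a using MvPolynomial.induction_on' with
  | add p q hp hq => simp only [jn_add_left, map_add, hp, hq]; abel
  | monomial m c =>
      rw [jn_monomial, pderiv_C_mul, pd5_iter, pderiv_monomial, pderiv_monomial,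
        jn_monomial, jn_monomial, jn_monomial,
        sub_single_self m 1,
        sub_single_ne m (show (1:Fin 6) ≠ 0 by decide),
        sub_single_ne m (show (1:Fin 6) ≠ 2 by decide),
        sub_single_self m 0,
        sub_single_ne m (show (0:Fin 6) ≠ 1 by decide),
        sub_single_ne m (show (0:Fin 6) ≠ 2 by decide),
        nsmul_C, nsmul_C, map_mul, map_mul]
      push_cast
      ring

-- stable names for the pairing derivative chain operators
def Pd (k : Fin 6) : P6 → P6 := fun r => pderiv k r
lemma Pd_apply (k : Fin 6) (r : P6) : Pd k r = pderiv k r := rfl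
lemma Pd_add (k : Fin 6) : ∀ p q : P6, Pd k (p + q) = Pd k p + Pd k q :=
  fun p q => map_add _ p q

lemma pp_monomial' (m : Fin 6 →₀ ℕ) (c : ℤ) (r : P6) :
    polarPair (monomial m c) r
      = c * constantCoeff ((Pd 0)^[m 3] ((Pd 1)^[m 4] ((Pd 2)^[m 5] r))) :=
  pp_monomial m c r

-- X i * · commutes with pderiv k for k ≠ i
lemma Xmul_pd {i k : Fin 6} (h : i ≠ k) (t : P6) :
    pderiv k (X i * t) = X i * pderiv k t := by
  rw [pderiv_mul, pderiv_X_of_ne h, zero_mul, zero_add]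

lemma Pd_iter_Xmul_ne {i k : Fin 6} (h : i ≠ k) (n : ℕ) (t : P6) :
    (Pd k)^[n] (X i * t) = X i * (Pd k)^[n] t := by
  induction n generalizing t with
  | zero => rfl
  | succ n ih => rw [Function.iterate_succ_apply, Function.iterate_succ_apply,
      Pd_apply, Xmul_pd h, ← Pd_apply, ih]

lemma Pd_iter_Xmul_self (i : Fin 6) (n : ℕ) (t : P6) :
    (Pd i)^[n] (X i * t) = X i * (Pd i)^[n] t + n • (Pd i)^[n-1] t := by
  have h := iter_comm (B := Pd i) (Aop := fun r => X i * r)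
    (E := fun r => -r) (Pd_add i)
    (fun p => by
      show X i * Pd i p = Pd i (X i * p) + -p
      rw [Pd_apply, Pd_apply, pderiv_mul, pderiv_X_self, one_mul]; ring)
    (fun p => by show -(Pd i p) = Pd i (-p); rw [Pd_apply, Pd_apply, map_neg]) n t
  have h2 : n • (Pd i)^[n-1] (-t) = -(n • (Pd i)^[n-1] t) := by
    rw [gen_iter_neg (Pd_add i), smul_neg]
  rw [h2] at h
  linear_combination -h

lemma constCoeff_Xmul (i : Fin 6) (s : P6) : constantCoeff (X i * s) = 0 := by
  rw [map_mul, constantCoeff_X, zero_mul]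

lemma L1_0 (t p : P6) : polarPair p (X 0 * t) = polarPair (pderiv 3 p) t := by
  induction p using MvPolynomial.induction_on' with
  | add p q hp hq => rw [pp_add_left, map_add, pp_add_left, hp, hq]
  | monomial m c =>
      rw [pp_monomial', pderiv_monomial, pp_monomial',
        sub_single_self m 3,
        sub_single_ne m (show (3:Fin 6) ≠ 4 by decide),
        sub_single_ne m (show (3:Fin 6) ≠ 5 by decide),
        Pd_iter_Xmul_ne (show (0:Fin 6) ≠ 2 by decide),
        Pd_iter_Xmul_ne (show (0:Fin 6) ≠ 1 by decide),
        Pd_iter_Xmul_self, map_add, constCoeff_Xmul, map_nsmul, zero_add, nsmul_eq_mul]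
      push_cast
      ring

lemma L1_1 (t p : P6) : polarPair p (X 1 * t) = polarPair (pderiv 4 p) t := by
  induction p using MvPolynomial.induction_on' with
  | add p q hp hq => rw [pp_add_left, map_add, pp_add_left, hp, hq]
  | monomial m c =>
      rw [pp_monomial', pderiv_monomial, pp_monomial',
        sub_single_ne m (show (4:Fin 6) ≠ 3 by decide),
        sub_single_self m 4,
        sub_single_ne m (show (4:Fin 6) ≠ 5 by decide),
        Pd_iter_Xmul_ne (show (1:Fin 6) ≠ 2 by decide),
        Pd_iter_Xmul_self, gen_iter_add (Pd_add 0), gen_iter_nsmul (Pd_add 0),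
        Pd_iter_Xmul_ne (show (1:Fin 6) ≠ 0 by decide),
        map_add, constCoeff_Xmul, map_nsmul, zero_add, nsmul_eq_mul]
      push_cast
      ring

lemma L1_2 (t p : P6) : polarPair p (X 2 * t) = polarPair (pderiv 5 p) t := by
  induction p using MvPolynomial.induction_on' with
  | add p q hp hq => rw [pp_add_left, map_add, pp_add_left, hp, hq]
  | monomial m c =>
      rw [pp_monomial', pderiv_monomial, pp_monomial',
        sub_single_ne m (show (5:Fin 6) ≠ 3 by decide),
        sub_single_ne m (show (5:Fin 6) ≠ 4 by decide),
        sub_single_self m 5,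
        Pd_iter_Xmul_self, gen_iter_add (Pd_add 1), gen_iter_nsmul (Pd_add 1),
        Pd_iter_Xmul_ne (show (2:Fin 6) ≠ 1 by decide),
        gen_iter_add (Pd_add 0), gen_iter_nsmul (Pd_add 0),
        Pd_iter_Xmul_ne (show (2:Fin 6) ≠ 0 by decide),
        map_add, constCoeff_Xmul, map_nsmul, zero_add, nsmul_eq_mul]
      push_cast
      ring

-- ===== degree bookkeeping =====
def Hdeg (n : ℕ) (q : P6) : Prop := ∀ m ∈ q.support, ∑ i : Fin 6, m i = n

lemma degree_eq_sum_univ (m : Fin 6 →₀ ℕ) : Finsupp.degree m = ∑ i : Fin 6, m i := by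
  rw [Finsupp.degree]
  exact Finset.sum_subset (Finset.subset_univ _)
    (fun i _ hi => Finsupp.notMem_support_iff.mp hi)

lemma hdeg_of_isHomogeneous {n : ℕ} {q : P6} (h : q.IsHomogeneous n) : Hdeg n q := by
  intro m hm
  have h1 : Finsupp.weight 1 m = n := h (mem_support_iff.mp hm)
  rw [← degree_eq_sum_univ]
  rw [Finsupp.degree_eq_weight_one]
  exact h1

lemma pderiv_as_sum (i : Fin 6) (q : P6) :
    pderiv i q = ∑ m ∈ q.support, monomial (m - Finsupp.single i 1) (q.coeff m * m i) := by
  conv_lhs => rw [as_sum q]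
  rw [map_sum]
  exact Finset.sum_congr rfl (fun m _ => by rw [pderiv_monomial])

lemma support_pderiv (i : Fin 6) (q : P6) :
    ∀ d ∈ (pderiv i q).support, ∃ m ∈ q.support, m i ≠ 0 ∧ d = m - Finsupp.single i 1 := by
  intro d hd
  rw [pderiv_as_sum] at hd
  classical
  obtain ⟨m, hm, hd2⟩ := Finset.mem_biUnion.mp (MvPolynomial.support_sum hd)
  refine ⟨m, hm, ?_⟩
  by_cases hz : (q.coeff m * (m i : ℤ)) = 0
  · rw [support_monomial, if_pos hz] at hd2; exact absurd hd2 (Finset.notMem_empty d)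
  · rw [support_monomial, if_neg hz] at hd2
    have : (m i : ℤ) ≠ 0 := fun h0 => hz (by rw [h0, mul_zero])
    exact ⟨by exact_mod_cast this, Finset.mem_singleton.mp hd2⟩

lemma hdeg_pderiv {n : ℕ} {q : P6} (h : Hdeg (n+1) q) (i : Fin 6) :
    Hdeg n (pderiv i q) := by
  intro d hd
  obtain ⟨m, hm, hne, rfl⟩ := support_pderiv i q d hd
  have hsum := h m hm
  have hsplit : ∀ j : Fin 6, (m - Finsupp.single i 1 : Fin 6 →₀ ℕ) j
      = if j = i then m i - 1 else m j := by
    intro j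
    by_cases hj : j = i
    · subst hj; simp [sub_single_self]
    · rw [sub_single_ne m (Ne.symm hj)]; simp [hj]
  rw [Finset.sum_congr rfl (fun j _ => hsplit j)]
  have key : (∑ j : Fin 6, if j = i then m i - 1 else m j) + 1 = ∑ j : Fin 6, m j := by
    rw [← Finset.sum_erase_add Finset.univ (fun j => if j = i then m i - 1 else m j)
        (Finset.mem_univ i),
      ← Finset.sum_erase_add Finset.univ (fun j => m j) (Finset.mem_univ i),
      Finset.sum_congr rfl
        (fun (j : Fin 6) (hj : j ∈ Finset.univ.erase i) => if_neg (Finset.ne_of_mem_erase hj)),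
      if_pos rfl, add_assoc, Nat.sub_add_cancel (Nat.one_le_iff_ne_zero.mpr hne)]
  omega

lemma onlyXYZ_pderiv {q : P6} (h : OnlyXYZ q) {i : Fin 6}
    (hi3 : i ≠ 3) (hi4 : i ≠ 4) (hi5 : i ≠ 5) : OnlyXYZ (pderiv i q) := by
  intro d hd
  obtain ⟨m, hm, hne, rfl⟩ := support_pderiv i q d hd
  obtain ⟨h3, h4, h5⟩ := h m hm
  exact ⟨by rw [sub_single_ne m hi3]; exact h3,
    by rw [sub_single_ne m hi4]; exact h4,
    by rw [sub_single_ne m hi5]; exact h5⟩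

lemma pderiv_eq_zero_of_onlyXYZ {q : P6} (h : OnlyXYZ q) {i : Fin 6}
    (hi : i = 3 ∨ i = 4 ∨ i = 5) : pderiv i q = 0 := by
  rw [pderiv_as_sum]
  apply Finset.sum_eq_zero
  intro m hm
  obtain ⟨h3, h4, h5⟩ := h m hm
  rcases hi with rfl | rfl | rfl
  · rw [h3]; simp
  · rw [h4]; simp
  · rw [h5]; simp

-- ===== Euler's identity =====
lemma X_mul_pd_monomial (i : Fin 6) (m : Fin 6 →₀ ℕ) (c : ℤ) :
    X i * pderiv i (monomial m c) = (m i) • monomial m c := by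
  rw [pderiv_monomial]
  by_cases hz : m i = 0
  · rw [hz]; simp
  · have hm : (Finsupp.single i 1) + (m - Finsupp.single i 1) = m := by
      ext j
      by_cases hj : j = i
      · subst hj
        simp only [Finsupp.add_apply, sub_single_self, Finsupp.single_apply]
        split
        · omega
        · next hfalse => exact absurd trivial hfalse
      · simp only [Finsupp.add_apply, sub_single_ne m (Ne.symm hj),
          Finsupp.single_apply, if_neg (Ne.symm hj), zero_add]
    rw [X, monomial_mul, hm, smul_monomial]
    congr 1
    rw [nsmul_eq_mul]
    ring

lemma euler {n : ℕ} {q : P6} (h : Hdeg n q) :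
    X 0 * pderiv 0 q + X 1 * pderiv 1 q + X 2 * pderiv 2 q
      + X 3 * pderiv 3 q + X 4 * pderiv 4 q + X 5 * pderiv 5 q = n • q := by
  conv_lhs => rw [as_sum q]
  conv_rhs => rw [as_sum q]
  rw [Finset.smul_sum]
  simp only [map_sum, Finset.mul_sum, ← Finset.sum_add_distrib]
  refine Finset.sum_congr rfl (fun m hm => ?_)
  rw [X_mul_pd_monomial, X_mul_pd_monomial, X_mul_pd_monomial, X_mul_pd_monomial,
    X_mul_pd_monomial, X_mul_pd_monomial, ← add_smul, ← add_smul, ← add_smul, ← add_smul,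
    ← add_smul]
  have := h m hm
  rw [Fin.sum_univ_six] at this
  rw [this]

-- ===== right linearity of polarPair and Jn =====
lemma gen_iter_zero {B : P6 → P6} (hB : ∀ p q, B (p + q) = B p + B q) (k : ℕ) :
    B^[k] 0 = 0 := by
  induction k with
  | zero => rfl
  | succ k ih => rw [Function.iterate_succ_apply, gen_zero hB, ih]

lemma pp_zero_left (r : P6) : polarPair 0 r = 0 := by
  unfold polarPair
  rw [MvPolynomial.support_zero]
  simp

lemma pp_sub_left (p p' r : P6) : polarPair (p - p') r = polarPair p r - polarPair p' r := by
  have h := pp_add_left (p - p') p' r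
  rw [sub_add_cancel] at h
  linarith

lemma pp_add_right (p r r' : P6) : polarPair p (r + r') = polarPair p r + polarPair p r' := by
  induction p using MvPolynomial.induction_on' with
  | monomial m c =>
      rw [pp_monomial', pp_monomial', pp_monomial', gen_iter_add (Pd_add 2),
        gen_iter_add (Pd_add 1), gen_iter_add (Pd_add 0), map_add]
      ring
  | add p q hp hq => rw [pp_add_left, pp_add_left, pp_add_left, hp, hq]; ring

lemma pp_zero_right (p : P6) : polarPair p 0 = 0 := by
  induction p using MvPolynomial.induction_on' with
  | monomial m c =>
      rw [pp_monomial', gen_iter_zero (Pd_add 2), gen_iter_zero (Pd_add 1),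
        gen_iter_zero (Pd_add 0), map_zero, mul_zero]
  | add p q hp hq => rw [pp_add_left, hp, hq, add_zero]

lemma pp_nsmul_right (k : ℕ) (p r : P6) : polarPair p (k • r) = k • polarPair p r := by
  induction k with
  | zero => simpa using pp_zero_right p
  | succ k ih => rw [succ_nsmul, succ_nsmul, pp_add_right, ih]

lemma Pd_iter_Cmul (k : Fin 6) (n : ℕ) (z : ℤ) (r : P6) :
    (Pd k)^[n] (C z * r) = C z * (Pd k)^[n] r := by
  induction n generalizing r with
  | zero => rfl
  | succ n ih => rw [Function.iterate_succ_apply, Function.iterate_succ_apply,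
      Pd_apply, pderiv_C_mul, ← Pd_apply, ih]

lemma pp_Cmul_right (z : ℤ) (p r : P6) : polarPair p (C z * r) = z * polarPair p r := by
  induction p using MvPolynomial.induction_on' with
  | monomial m c =>
      rw [pp_monomial', pp_monomial', Pd_iter_Cmul, Pd_iter_Cmul, Pd_iter_Cmul, map_mul,
        constantCoeff_C]
      ring
  | add p q hp hq => rw [pp_add_left, pp_add_left, hp, hq]; ring

lemma jn_zero_right (a : P6) : Jn a 0 = 0 := by
  unfold Jn
  apply Finset.sum_eq_zero
  intro m _
  rw [gen_iter_zero D3_add, gen_iter_zero D2_add, gen_iter_zero D1_add, mul_zero]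

-- ===== the fundamental recursion =====
lemma star {n : ℕ} (a b c : P6) (hb : OnlyXYZ b) (hcx : OnlyXYZ c) (hc : Hdeg n c) :
    (n : ℤ) * tn a b c
      = tn (pderiv 2 a) (pderiv 1 b) (pderiv 0 c) - tn (pderiv 1 a) (pderiv 2 b) (pderiv 0 c)
      + (tn (pderiv 0 a) (pderiv 2 b) (pderiv 1 c) - tn (pderiv 2 a) (pderiv 0 b) (pderiv 1 c))
      + (tn (pderiv 1 a) (pderiv 0 b) (pderiv 2 c) - tn (pderiv 0 a) (pderiv 1 b) (pderiv 2 c)) := by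
  have hc3 : pderiv 3 c = 0 := pderiv_eq_zero_of_onlyXYZ hcx (Or.inl rfl)
  have hc4 : pderiv 4 c = 0 := pderiv_eq_zero_of_onlyXYZ hcx (Or.inr (Or.inl rfl))
  have hc5 : pderiv 5 c = 0 := pderiv_eq_zero_of_onlyXYZ hcx (Or.inr (Or.inr rfl))
  have hb3 : pderiv 3 b = 0 := pderiv_eq_zero_of_onlyXYZ hb (Or.inl rfl)
  have hb4 : pderiv 4 b = 0 := pderiv_eq_zero_of_onlyXYZ hb (Or.inr (Or.inl rfl))
  have hb5 : pderiv 5 b = 0 := pderiv_eq_zero_of_onlyXYZ hb (Or.inr (Or.inr rfl))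
  have he := euler hc
  rw [hc3, hc4, hc5, mul_zero, mul_zero, mul_zero, add_zero, add_zero, add_zero] at he
  have l23 : pderiv 3 (Jn a b) = Jn (pderiv 2 a) (pderiv 1 b) - Jn (pderiv 1 a) (pderiv 2 b) := by
    rw [L2_3, hb3, jn_zero_right, zero_add]
  have l24 : pderiv 4 (Jn a b) = Jn (pderiv 0 a) (pderiv 2 b) - Jn (pderiv 2 a) (pderiv 0 b) := by
    rw [L2_4, hb4, jn_zero_right, zero_add]
  have l25 : pderiv 5 (Jn a b) = Jn (pderiv 1 a) (pderiv 0 b) - Jn (pderiv 0 a) (pderiv 1 b) := by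
    rw [L2_5, hb5, jn_zero_right, zero_add]
  have main : polarPair (Jn a b) ((n : ℕ) • c)
      = polarPair (pderiv 3 (Jn a b)) (pderiv 0 c)
        + polarPair (pderiv 4 (Jn a b)) (pderiv 1 c)
        + polarPair (pderiv 5 (Jn a b)) (pderiv 2 c) := by
    rw [← he, pp_add_right, pp_add_right, L1_0, L1_1, L1_2]
  rw [pp_nsmul_right, nsmul_eq_mul] at main
  show (n : ℤ) * polarPair (Jn a b) c = _
  rw [main, l23, l24, l25, pp_sub_left, pp_sub_left, pp_sub_left]
  rfl

-- ===== degree-zero base case =====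
lemma eq_C_of_hdeg0 {q : P6} (h : Hdeg 0 q) : q = C (q.coeff 0) := by
  have hsub : q.support ⊆ {0} := by
    intro m hm
    have hs := h m hm
    have hm0 : m = 0 := by
      ext j
      have hle : m j ≤ ∑ i : Fin 6, m i :=
        Finset.single_le_sum (fun i _ => Nat.zero_le (m i)) (Finset.mem_univ j)
      simp only [Finsupp.coe_zero, Pi.zero_apply]
      omega
    rw [hm0]; exact Finset.mem_singleton_self 0
  conv_lhs => rw [as_sum q]
  rw [Finset.sum_subset hsub (fun x _ hx => by
    rw [MvPolynomial.notMem_support_iff.mp hx, monomial_zero]),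
    Finset.sum_singleton, C_apply]

lemma tn_const (α β γ : ℤ) : tn (C α) (C β) (C γ) = α * (β * γ) := by
  show polarPair (Jn (C α) (C β)) (C γ) = _
  rw [C_apply (a := α), jn_monomial]
  have h0 : ((0 : Fin 6 →₀ ℕ) : Fin 6 → ℕ) = 0 := rfl
  simp only [Finsupp.coe_zero, Pi.zero_apply, Function.iterate_zero, id_eq]
  rw [← map_mul, C_apply, pp_monomial']
  simp only [Finsupp.coe_zero, Pi.zero_apply, Function.iterate_zero, id_eq, constantCoeff_C]
  ring

-- ===== the symmetry theorem =====
lemma tn_swaps : ∀ (n : ℕ) (a b c : P6), Hdeg n a → Hdeg n b → Hdeg n c →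
    OnlyXYZ a → OnlyXYZ b → OnlyXYZ c →
    tn a b c = (-1:ℤ)^n * tn b a c ∧ tn a b c = (-1:ℤ)^n * tn a c b := by
  intro n
  induction n with
  | zero =>
      intro a b c ha hb hc _ _ _
      rw [eq_C_of_hdeg0 ha, eq_C_of_hdeg0 hb, eq_C_of_hdeg0 hc, tn_const, tn_const, tn_const,
        pow_zero]
      constructor <;> ring
  | succ n ih =>
      intro a b c ha hb hc hax hbx hcx
      have Ha : ∀ i : Fin 6, Hdeg n (pderiv i a) := hdeg_pderiv ha
      have Hb : ∀ i : Fin 6, Hdeg n (pderiv i b) := hdeg_pderiv hb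
      have Hc : ∀ i : Fin 6, Hdeg n (pderiv i c) := hdeg_pderiv hc
      have oa0 : OnlyXYZ (pderiv 0 a) := onlyXYZ_pderiv hax (by decide) (by decide) (by decide)
      have oa1 : OnlyXYZ (pderiv 1 a) := onlyXYZ_pderiv hax (by decide) (by decide) (by decide)
      have oa2 : OnlyXYZ (pderiv 2 a) := onlyXYZ_pderiv hax (by decide) (by decide) (by decide)
      have ob0 : OnlyXYZ (pderiv 0 b) := onlyXYZ_pderiv hbx (by decide) (by decide) (by decide)
      have ob1 : OnlyXYZ (pderiv 1 b) := onlyXYZ_pderiv hbx (by decide) (by decide) (by decide)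
      have ob2 : OnlyXYZ (pderiv 2 b) := onlyXYZ_pderiv hbx (by decide) (by decide) (by decide)
      have oc0 : OnlyXYZ (pderiv 0 c) := onlyXYZ_pderiv hcx (by decide) (by decide) (by decide)
      have oc1 : OnlyXYZ (pderiv 1 c) := onlyXYZ_pderiv hcx (by decide) (by decide) (by decide)
      have oc2 : OnlyXYZ (pderiv 2 c) := onlyXYZ_pderiv hcx (by decide) (by decide) (by decide)
      have hN : (((n+1 : ℕ)) : ℤ) ≠ 0 := by exact_mod_cast Nat.succ_ne_zero n
      have h1 := star a b c hbx hcx hc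
      have h2 := star b a c hax hcx hc
      have h3 := star a c b hcx hbx hb
      constructor
      · -- swap of the first two arguments
        have e1 := (ih _ _ _ (Ha 2) (Hb 1) (Hc 0) oa2 ob1 oc0).1
        have e2 := (ih _ _ _ (Ha 1) (Hb 2) (Hc 0) oa1 ob2 oc0).1
        have e3 := (ih _ _ _ (Ha 0) (Hb 2) (Hc 1) oa0 ob2 oc1).1
        have e4 := (ih _ _ _ (Ha 2) (Hb 0) (Hc 1) oa2 ob0 oc1).1
        have e5 := (ih _ _ _ (Ha 1) (Hb 0) (Hc 2) oa1 ob0 oc2).1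
        have e6 := (ih _ _ _ (Ha 0) (Hb 1) (Hc 2) oa0 ob1 oc2).1
        have key : (((n+1 : ℕ)) : ℤ) * tn a b c
            = (((n+1 : ℕ)) : ℤ) * ((-1:ℤ)^(n+1) * tn b a c) := by
          push_cast at h1 h2 ⊢
          linear_combination h1 + ((-1:ℤ)^n) * h2 + e1 - e2 + e3 - e4 + e5 - e6
        exact mul_left_cancel₀ hN key
      · -- swap of the last two arguments
        have f1 := (ih _ _ _ (Ha 2) (Hb 1) (Hc 0) oa2 ob1 oc0).2
        have f2 := (ih _ _ _ (Ha 1) (Hb 2) (Hc 0) oa1 ob2 oc0).2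
        have f3 := (ih _ _ _ (Ha 0) (Hb 2) (Hc 1) oa0 ob2 oc1).2
        have f4 := (ih _ _ _ (Ha 2) (Hb 0) (Hc 1) oa2 ob0 oc1).2
        have f5 := (ih _ _ _ (Ha 1) (Hb 0) (Hc 2) oa1 ob0 oc2).2
        have f6 := (ih _ _ _ (Ha 0) (Hb 1) (Hc 2) oa0 ob1 oc2).2
        have key : (((n+1 : ℕ)) : ℤ) * tn a b c
            = (((n+1 : ℕ)) : ℤ) * ((-1:ℤ)^(n+1) * tn a c b) := by
          push_cast at h1 h3 ⊢
          linear_combination h1 + ((-1:ℤ)^n) * h3 + f1 - f2 + f3 - f4 + f5 - f6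
        exact mul_left_cancel₀ hN key

end

open MvPolynomial

/-- The action on ternary forms in `x, y, z` of the derivation (vector field)
`∑ g_{ij} x_i ∂_{x_j}` associated to a `3×3` matrix `g`. -/
noncomputable def slAction (g : Matrix (Fin 3) (Fin 3) ℤ) (q : Poly6 ℤ) : Poly6 ℤ :=
  ∑ i : Fin 3, ∑ j : Fin 3,
    MvPolynomial.C (g i j) * (X (Fin.castLE (by omega) i) *
      pderiv (Fin.castLE (by omega) j) q)

/-- For every traceless derivation `g ∈ 𝔰𝔩₃` and every ternary form `q` of degree
`n`, the identity `⟨h_n(q), g·q⟩ = 0` holds. -/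
theorem statement10 (n : ℕ) (g : Matrix (Fin 3) (Fin 3) ℤ) (htr : g.trace = 0)
    (q : Poly6 ℤ) (hhom : q.IsHomogeneous n) (hxyz : OnlyXYZ q) :
    polarPair (hn q) (slAction g q) = 0 := by
  classical
  have hq : Hdeg n q := hdeg_of_isHomogeneous hhom
  cases n with
  | zero =>
      have hs : slAction g q = 0 := by
        unfold slAction
        apply Finset.sum_eq_zero; intro i _
        apply Finset.sum_eq_zero; intro j _
        rw [eq_C_of_hdeg0 hq, pderiv_C, mul_zero, mul_zero]
      rw [hs, pp_zero_right]
  | succ k =>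
      have htr' : g 0 0 + g 1 1 + g 2 2 = 0 := by
        have h := htr
        rw [Matrix.trace, Fin.sum_univ_three] at h
        exact h
      have Hq : ∀ i : Fin 6, Hdeg k (pderiv i q) := hdeg_pderiv hq
      have o : ∀ j : Fin 6, (j = 0 ∨ j = 1 ∨ j = 2) → OnlyXYZ (pderiv j q) := by
        intro j hj
        rcases hj with rfl|rfl|rfl <;>
          exact onlyXYZ_pderiv hxyz (by decide) (by decide) (by decide)
      have q3 : pderiv 3 q = 0 := pderiv_eq_zero_of_onlyXYZ hxyz (Or.inl rfl)
      have q4 : pderiv 4 q = 0 := pderiv_eq_zero_of_onlyXYZ hxyz (Or.inr (Or.inl rfl))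
      have q5 : pderiv 5 q = 0 := pderiv_eq_zero_of_onlyXYZ hxyz (Or.inr (Or.inr rfl))
      have l3 : pderiv 3 (Jn q q) = Jn (pderiv 2 q) (pderiv 1 q) - Jn (pderiv 1 q) (pderiv 2 q) := by
        rw [L2_3, q3, jn_zero_right, zero_add]
      have l4 : pderiv 4 (Jn q q) = Jn (pderiv 0 q) (pderiv 2 q) - Jn (pderiv 2 q) (pderiv 0 q) := by
        rw [L2_4, q4, jn_zero_right, zero_add]
      have l5 : pderiv 5 (Jn q q) = Jn (pderiv 1 q) (pderiv 0 q) - Jn (pderiv 0 q) (pderiv 1 q) := by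
        rw [L2_5, q5, jn_zero_right, zero_add]
      have e0 : ∀ h : (3:ℕ) ≤ 6, Fin.castLE h (0 : Fin 3) = (0 : Fin 6) := fun _ => rfl
      have e1 : ∀ h : (3:ℕ) ≤ 6, Fin.castLE h (1 : Fin 3) = (1 : Fin 6) := fun _ => rfl
      have e2 : ∀ h : (3:ℕ) ≤ 6, Fin.castLE h (2 : Fin 3) = (2 : Fin 6) := fun _ => rfl
      unfold slAction hn
      rw [Fin.sum_univ_three]
      simp only [Fin.sum_univ_three, e0, e1, e2]
      simp only [pp_add_right, pp_Cmul_right, L1_0, L1_1, L1_2, l3, l4, l5, pp_sub_left]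
      -- symmetry instances
      have I : ∀ l m j : Fin 6, (l = 0 ∨ l = 1 ∨ l = 2) → (m = 0 ∨ m = 1 ∨ m = 2) →
          (j = 0 ∨ j = 1 ∨ j = 2) →
          (polarPair (Jn (pderiv l q) (pderiv m q)) (pderiv j q)
            = (-1:ℤ)^k * polarPair (Jn (pderiv m q) (pderiv l q)) (pderiv j q)
          ∧ polarPair (Jn (pderiv l q) (pderiv m q)) (pderiv j q)
            = (-1:ℤ)^k * polarPair (Jn (pderiv l q) (pderiv j q)) (pderiv m q)) :=
        fun l m j hl hm hj =>
          tn_swaps k _ _ _ (Hq l) (Hq m) (Hq j) (o l hl) (o m hm) (o j hj)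
      have d0 : (0:Fin 6) = 0 ∨ (0:Fin 6) = 1 ∨ (0:Fin 6) = 2 := Or.inl rfl
      have d1 : (1:Fin 6) = 0 ∨ (1:Fin 6) = 1 ∨ (1:Fin 6) = 2 := Or.inr (Or.inl rfl)
      have d2 : (2:Fin 6) = 0 ∨ (2:Fin 6) = 1 ∨ (2:Fin 6) = 2 := Or.inr (Or.inr rfl)
      rcases Nat.even_or_odd k with hk | hk
      · have hs : (-1:ℤ)^k = 1 := Even.neg_one_pow hk
        have a0 := (I 2 1 0 d2 d1 d0).1; rw [hs, one_mul] at a0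
        have a1 := (I 2 1 1 d2 d1 d1).1; rw [hs, one_mul] at a1
        have a2 := (I 2 1 2 d2 d1 d2).1; rw [hs, one_mul] at a2
        have b0 := (I 0 2 0 d0 d2 d0).1; rw [hs, one_mul] at b0
        have b1 := (I 0 2 1 d0 d2 d1).1; rw [hs, one_mul] at b1
        have b2 := (I 0 2 2 d0 d2 d2).1; rw [hs, one_mul] at b2
        have c0 := (I 1 0 0 d1 d0 d0).1; rw [hs, one_mul] at c0
        have c1 := (I 1 0 1 d1 d0 d1).1; rw [hs, one_mul] at c1
        have c2 := (I 1 0 2 d1 d0 d2).1; rw [hs, one_mul] at c2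
        linear_combination (g 0 0) * a0 + (g 0 1) * a1 + (g 0 2) * a2
          + (g 1 0) * b0 + (g 1 1) * b1 + (g 1 2) * b2
          + (g 2 0) * c0 + (g 2 1) * c1 + (g 2 2) * c2
      · have hs : (-1:ℤ)^k = -1 := Odd.neg_one_pow hk
        -- row 0 : τ(2,1,j) - τ(1,2,j)
        have r1 := (I 2 1 0 d2 d1 d0).1; rw [hs] at r1
        have r2 := (I 1 2 0 d1 d2 d0).2; rw [hs] at r2
        have r3 := (I 1 0 2 d1 d0 d2).1; rw [hs] at r3
        have v1 : polarPair (Jn (pderiv 2 q) (pderiv 1 q)) (pderiv 0 q)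
            - polarPair (Jn (pderiv 1 q) (pderiv 2 q)) (pderiv 0 q)
            = -2 * polarPair (Jn (pderiv 0 q) (pderiv 1 q)) (pderiv 2 q) := by linarith
        have r4 := (I 2 1 1 d2 d1 d1).1; rw [hs] at r4
        have r5 := (I 1 2 1 d1 d2 d1).2; rw [hs] at r5
        have r6 := (I 1 1 2 d1 d1 d2).1; rw [hs] at r6
        have v2 : polarPair (Jn (pderiv 2 q) (pderiv 1 q)) (pderiv 1 q)
            - polarPair (Jn (pderiv 1 q) (pderiv 2 q)) (pderiv 1 q) = 0 := by linarith
        have r7 := (I 2 1 2 d2 d1 d2).1; rw [hs] at r7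
        have r8 := (I 1 2 2 d1 d2 d2).2; rw [hs] at r8
        have v3 : polarPair (Jn (pderiv 2 q) (pderiv 1 q)) (pderiv 2 q)
            - polarPair (Jn (pderiv 1 q) (pderiv 2 q)) (pderiv 2 q) = 0 := by linarith
        -- row 1 : τ(0,2,j) - τ(2,0,j)
        have r9 := (I 2 0 0 d2 d0 d0).1; rw [hs] at r9
        have r10 := (I 0 2 0 d0 d2 d0).2; rw [hs] at r10
        have r11 := (I 0 0 2 d0 d0 d2).1; rw [hs] at r11
        have v4 : polarPair (Jn (pderiv 0 q) (pderiv 2 q)) (pderiv 0 q)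
            - polarPair (Jn (pderiv 2 q) (pderiv 0 q)) (pderiv 0 q) = 0 := by linarith
        have r12 := (I 2 0 1 d2 d0 d1).1; rw [hs] at r12
        have r13 := (I 0 2 1 d0 d2 d1).2; rw [hs] at r13
        have v5 : polarPair (Jn (pderiv 0 q) (pderiv 2 q)) (pderiv 1 q)
            - polarPair (Jn (pderiv 2 q) (pderiv 0 q)) (pderiv 1 q)
            = -2 * polarPair (Jn (pderiv 0 q) (pderiv 1 q)) (pderiv 2 q) := by linarith
        have r14 := (I 0 2 2 d0 d2 d2).1; rw [hs] at r14
        have r15 := (I 0 2 2 d0 d2 d2).2; rw [hs] at r15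
        have v6 : polarPair (Jn (pderiv 0 q) (pderiv 2 q)) (pderiv 2 q)
            - polarPair (Jn (pderiv 2 q) (pderiv 0 q)) (pderiv 2 q) = 0 := by linarith
        -- row 2 : τ(1,0,j) - τ(0,1,j)
        have r16 := (I 1 0 0 d1 d0 d0).1; rw [hs] at r16
        have r17 := (I 0 1 0 d0 d1 d0).2; rw [hs] at r17
        have r18 := (I 0 0 1 d0 d0 d1).1; rw [hs] at r18
        have v7 : polarPair (Jn (pderiv 1 q) (pderiv 0 q)) (pderiv 0 q)
            - polarPair (Jn (pderiv 0 q) (pderiv 1 q)) (pderiv 0 q) = 0 := by linarith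
        have r19 := (I 1 0 1 d1 d0 d1).1; rw [hs] at r19
        have r20 := (I 0 1 1 d0 d1 d1).2; rw [hs] at r20
        have v8 : polarPair (Jn (pderiv 1 q) (pderiv 0 q)) (pderiv 1 q)
            - polarPair (Jn (pderiv 0 q) (pderiv 1 q)) (pderiv 1 q) = 0 := by linarith
        have v9 : polarPair (Jn (pderiv 1 q) (pderiv 0 q)) (pderiv 2 q)
            - polarPair (Jn (pderiv 0 q) (pderiv 1 q)) (pderiv 2 q)
            = -2 * polarPair (Jn (pderiv 0 q) (pderiv 1 q)) (pderiv 2 q) := by linarith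
        linear_combination (g 0 0) * v1 + (g 0 1) * v2 + (g 0 2) * v3
          + (g 1 0) * v4 + (g 1 1) * v5 + (g 1 2) * v6
          + (g 2 0) * v7 + (g 2 1) * v8 + (g 2 2) * v9
          - 2 * polarPair (Jn (pderiv 0 q) (pderiv 1 q)) (pderiv 2 q) * htr'
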